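/- The category OGraph of open-graphs has unique strong epi–mono factorizations: every morphism f factors as a monomorphism composed with a strong epimorphism, uniquely up to isomorphism. -/

import Mathlib

open CategoryTheory Limits

/-! Directed graphs as `E ⇉ P` data, the type graph `2_G`, the slice category of
`2_G`-typed graphs, and the category `OGraph` of open-graphs. -/

structure PreGraph : Type 1 where
  E : Type
  P : Type
  s : E → P
  t : E → P

/-- The points of the type graph `2_G`: vertices `V` and edge-points `ε`. -/
inductive TyP : Type
  | V : TyP
  | eps : TyP
  deriving DecidableEq

/-- The edges of the type graph `2_G`: `V → ε`, `ε → V` and the loop on `ε`. -/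
inductive TyE : Type
  | ve : TyE
  | ev : TyE
  | loop : TyE
  deriving DecidableEq

/-- The type graph `2_G`. -/
def twoG : PreGraph where
  E := TyE
  P := TyP
  s e := match e with | .ve => .V | .ev => .eps | .loop => .eps
  t e := match e with | .ve => .eps | .ev => .V | .loop => .eps

structure GraphHom (G H : PreGraph) : Type where
  pe : G.E → H.E
  pp : G.P → H.P
  hs : ∀ e, H.s (pe e) = pp (G.s e)
  ht : ∀ e, H.t (pe e) = pp (G.t e)

def GraphHom.idHom (G : PreGraph) : GraphHom G G :=
  ⟨fun e => e, fun p => p, fun _ => rfl, fun _ => rfl⟩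

def GraphHom.comp {G H K : PreGraph} (f : GraphHom G H) (g : GraphHom H K) :
    GraphHom G K :=
  ⟨fun e => g.pe (f.pe e), fun p => g.pp (f.pp p),
   fun e => by rw [g.hs, f.hs], fun e => by rw [g.ht, f.ht]⟩

/-- An object of the slice category `Graph/2_G`: a graph together with a typing
morphism into `2_G`. -/
structure TypedGraph : Type 1 where
  G : PreGraph
  τ : GraphHom G twoG

/-- A morphism of `2_G`-typed graphs: a graph morphism commuting with the typing. -/
@[ext]
structure TypedHom (X Y : TypedGraph) : Type where
  h : GraphHom X.G Y.G
  comm_pp : ∀ p, Y.τ.pp (h.pp p) = X.τ.pp p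
  comm_pe : ∀ e, Y.τ.pe (h.pe e) = X.τ.pe e

def TypedHom.idHom (X : TypedGraph) : TypedHom X X :=
  ⟨GraphHom.idHom X.G, fun _ => rfl, fun _ => rfl⟩

def TypedHom.comp {X Y Z : TypedGraph} (f : TypedHom X Y) (g : TypedHom Y Z) :
    TypedHom X Z :=
  ⟨f.h.comp g.h,
   fun p => by show Z.τ.pp (g.h.pp (f.h.pp p)) = _; rw [g.comm_pp, f.comm_pp],
   fun e => by show Z.τ.pe (g.h.pe (f.h.pe e)) = _; rw [g.comm_pe, f.comm_pe]⟩

instance : Category TypedGraph where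
  Hom := TypedHom
  id := TypedHom.idHom
  comp := TypedHom.comp
  id_comp _ := rfl
  comp_id _ := rfl
  assoc _ _ _ := rfl

/-- An open-graph: a `2_G`-typed graph in which every edge-point has at most one
in-edge and at most one out-edge. -/
structure OGraph : Type 1 where
  X : TypedGraph
  open_in : ∀ p, X.τ.pp p = TyP.eps →
    ∀ e₁ e₂, X.G.t e₁ = p → X.G.t e₂ = p → e₁ = e₂
  open_out : ∀ p, X.τ.pp p = TyP.eps →
    ∀ e₁ e₂, X.G.s e₁ = p → X.G.s e₂ = p → e₁ = e₂

/-- A typed-graph morphism is full on vertices when every edge adjacent to the image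
`f(v)` of a vertex `v` is the image of an edge adjacent to `v`. -/
def FullOnVertices {X Y : TypedGraph} (f : TypedHom X Y) : Prop :=
  ∀ v, X.τ.pp v = TyP.V → ∀ e, (Y.G.s e = f.h.pp v ∨ Y.G.t e = f.h.pp v) →
    ∃ e', f.h.pe e' = e ∧ (X.G.s e' = v ∨ X.G.t e' = v)

/-- A morphism of open-graphs: a typed-graph morphism that is full on vertices. -/
@[ext]
structure OHom (G H : OGraph) : Type where
  f : TypedHom G.X H.X
  full : FullOnVertices f

theorem fullOnVertices_id (G : OGraph) : FullOnVertices (TypedHom.idHom G.X) :=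
  fun _ _ e he => ⟨e, rfl, he⟩

theorem fullOnVertices_comp {G H K : OGraph} (f : TypedHom G.X H.X)
    (g : TypedHom H.X K.X) (hf : FullOnVertices f) (hg : FullOnVertices g) :
    FullOnVertices (f.comp g) := by
  intro v hv e he
  have hfv : H.X.τ.pp (f.h.pp v) = TyP.V := by rw [f.comm_pp]; exact hv
  obtain ⟨e', he', hadj'⟩ := hg (f.h.pp v) hfv e he
  obtain ⟨e'', he'', hadj''⟩ := hf v hv e' hadj'
  exact ⟨e'', by show g.h.pe (f.h.pe e'') = e; rw [he'', he'], hadj''⟩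

def OHom.idHom (G : OGraph) : OHom G G := ⟨TypedHom.idHom G.X, fullOnVertices_id G⟩

def OHom.comp {G H K : OGraph} (φ : OHom G H) (ψ : OHom H K) : OHom G K :=
  ⟨φ.f.comp ψ.f, fullOnVertices_comp φ.f ψ.f φ.full ψ.full⟩

instance : Category OGraph where
  Hom := OHom
  id := OHom.idHom
  comp := OHom.comp
  id_comp _ := rfl
  comp_id _ := rfl
  assoc _ _ _ := rfl

/-- The point map of an open-graph morphism. -/
def OHom.pp {G H : OGraph} (φ : OHom G H) : G.X.G.P → H.X.G.P := φ.f.h.pp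

/-- The edge map of an open-graph morphism. -/
def OHom.pe {G H : OGraph} (φ : OHom G H) : G.X.G.E → H.X.G.E := φ.f.h.pe

/-- The embedding functor `S : OGraph ⥤ Graph/2_G`. -/
def S : OGraph ⥤ TypedGraph where
  obj G := G.X
  map f := f.f
  map_id _ := rfl
  map_comp _ _ := rfl

/-- An edge-point of an open-graph. -/
def IsEdgePoint (G : OGraph) (p : G.X.G.P) : Prop := G.X.τ.pp p = TyP.eps

/-- An input: an edge-point with no in-edges. -/
def IsInput (G : OGraph) (p : G.X.G.P) : Prop :=
  IsEdgePoint G p ∧ ∀ e, G.X.G.t e ≠ p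

/-- An output: an edge-point with no out-edges. -/
def IsOutput (G : OGraph) (p : G.X.G.P) : Prop :=
  IsEdgePoint G p ∧ ∀ e, G.X.G.s e ≠ p

/-- The boundary graph of `G`: the point graph `In(G) + Out(G)`. -/
def boundaryGraph (G : OGraph) : OGraph where
  X := { G := { E := Empty
                P := {p // IsInput G p} ⊕ {p // IsOutput G p}
                s := fun e => e.elim
                t := fun e => e.elim }
         τ := { pe := fun e => e.elim
                pp := fun _ => TyP.eps
                hs := fun e => e.elim
                ht := fun e => e.elim } }
  open_in := fun _ _ e => e.elim
  open_out := fun _ _ e => e.elim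

/-- The boundary map `b : In(G) + Out(G) ⟶ G`. -/
def boundaryMap (G : OGraph) : boundaryGraph G ⟶ G :=
  OHom.mk
    (TypedHom.mk
      (GraphHom.mk (fun e => e.elim)
        (fun p => Sum.elim (fun q => q.val) (fun q => q.val) p)
        (fun e => e.elim) (fun e => e.elim))
      (by rintro (⟨p, hp⟩ | ⟨p, hp⟩) <;> exact hp.1)
      (fun e => e.elim))
    (by rintro (⟨p, hp⟩ | ⟨p, hp⟩) hv <;> exact absurd hv (by simp [boundaryGraph]))

/-- An isolated point: both an input and an output. -/
def IsIsolated (G : OGraph) (p : G.X.G.P) : Prop := IsInput G p ∧ IsOutput G p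

/-- A point graph: an open-graph consisting only of (isolated) edge-points. -/
def IsPointGraph (G : OGraph) : Prop :=
  (∀ p, IsEdgePoint G p) ∧ (G.X.G.E → False)

/-- A boundary-coherent span of open-graphs. -/
def BoundaryCoherent {G H₁ H₂ : OGraph} (f : G ⟶ H₁) (g : G ⟶ H₂) : Prop :=
  Mono f ∧ Mono g ∧
  (∀ p, IsInput G p → ¬(IsInput H₁ (OHom.pp f p) ∧ IsInput H₂ (OHom.pp g p))) ∧
  (∀ p, IsOutput G p → ¬(IsOutput H₁ (OHom.pp f p) ∧ IsOutput H₂ (OHom.pp g p)))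


/-! ### Auxiliary machinery -/

section Aux

theorem GraphHom.ext' {G H : PreGraph} {f g : GraphHom G H}
    (hpe : f.pe = g.pe) (hpp : f.pp = g.pp) : f = g := by
  cases f; cases g; cases hpe; cases hpp; rfl

theorem OHom.ext' {G H : OGraph} {f g : G ⟶ H}
    (hpe : OHom.pe f = OHom.pe g) (hpp : OHom.pp f = OHom.pp g) : f = g := by
  obtain ⟨⟨hf, _, _⟩, _⟩ := f
  obtain ⟨⟨hg, _, _⟩, _⟩ := g
  have : hf = hg := GraphHom.ext' hpe hpp
  cases this; rfl

theorem comp_pp {G H K : OGraph} (φ : G ⟶ H) (ψ : H ⟶ K) (p : G.X.G.P) :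
    OHom.pp (φ ≫ ψ) p = OHom.pp ψ (OHom.pp φ p) := rfl

theorem comp_pe {G H K : OGraph} (φ : G ⟶ H) (ψ : H ⟶ K) (e : G.X.G.E) :
    OHom.pe (φ ≫ ψ) e = OHom.pe ψ (OHom.pe φ e) := rfl

theorem mono_of_injective {G H : OGraph} (z : G ⟶ H)
    (hpe : Function.Injective (OHom.pe z)) (hpp : Function.Injective (OHom.pp z)) :
    Mono z := by
  constructor
  intro K a b hab
  refine OHom.ext' (funext fun x => hpe ?_) (funext fun x => hpp ?_)
  · exact congrFun (congrArg OHom.pe hab) x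
  · exact congrFun (congrArg OHom.pp hab) x

theorem epi_of_surjective {G H : OGraph} (z : G ⟶ H)
    (hpe : Function.Surjective (OHom.pe z)) (hpp : Function.Surjective (OHom.pp z)) :
    Epi z := by
  constructor
  intro K a b hab
  refine OHom.ext' (funext fun x => ?_) (funext fun x => ?_)
  · obtain ⟨g, rfl⟩ := hpe x
    exact congrFun (congrArg OHom.pe hab) g
  · obtain ⟨g, rfl⟩ := hpp x
    exact congrFun (congrArg OHom.pp hab) g

/-- typing compatibility of an `OHom` on points. -/
theorem pp_type {G H : OGraph} (z : G ⟶ H) (p : G.X.G.P) :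
    H.X.τ.pp (OHom.pp z p) = G.X.τ.pp p := z.f.comm_pp p

theorem pe_type {G H : OGraph} (z : G ⟶ H) (e : G.X.G.E) :
    H.X.τ.pe (OHom.pe z e) = G.X.τ.pe e := z.f.comm_pe e

theorem pp_s {G H : OGraph} (z : G ⟶ H) (e : G.X.G.E) :
    H.X.G.s (OHom.pe z e) = OHom.pp z (G.X.G.s e) := z.f.h.hs e

theorem pp_t {G H : OGraph} (z : G ⟶ H) (e : G.X.G.E) :
    H.X.G.t (OHom.pe z e) = OHom.pp z (G.X.G.t e) := z.f.h.ht e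

/-- If the target of an edge is a vertex then its source is an edge-point. -/
theorem src_eps_of_tgt_V (Y : OGraph) (ε : Y.X.G.E)
    (h : Y.X.τ.pp (Y.X.G.t ε) = TyP.V) : Y.X.τ.pp (Y.X.G.s ε) = TyP.eps := by
  have hs := Y.X.τ.hs ε
  have ht := Y.X.τ.ht ε
  cases hty : Y.X.τ.pe ε <;> rw [hty] at hs ht
  · rw [← ht] at h; exact absurd h (by simp [twoG])
  · exact hs.symm
  · rw [← ht] at h; exact absurd h (by simp [twoG])

theorem tgt_eps_of_src_V (Y : OGraph) (ε : Y.X.G.E)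
    (h : Y.X.τ.pp (Y.X.G.s ε) = TyP.V) : Y.X.τ.pp (Y.X.G.t ε) = TyP.eps := by
  have hs := Y.X.τ.hs ε
  have ht := Y.X.τ.ht ε
  cases hty : Y.X.τ.pe ε <;> rw [hty] at hs ht
  · exact ht.symm
  · rw [← hs] at h; exact absurd h (by simp [twoG])
  · rw [← hs] at h; exact absurd h (by simp [twoG])

/-- Every edge has at least one edge-point endpoint. -/
theorem edge_has_eps (X : OGraph) (d : X.X.G.E) :
    IsEdgePoint X (X.X.G.s d) ∨ IsEdgePoint X (X.X.G.t d) := by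
  have hs := X.X.τ.hs d
  have ht := X.X.τ.ht d
  cases hty : X.X.τ.pe d <;> rw [hty] at hs ht
  · exact Or.inr ht.symm
  · exact Or.inl hs.symm
  · exact Or.inl hs.symm

/-- The single edge-point graph. -/
def ptGraph : OGraph where
  X := { G := { E := Empty
                P := Unit
                s := fun e => e.elim
                t := fun e => e.elim }
         τ := { pe := fun e => e.elim
                pp := fun _ => TyP.eps
                hs := fun e => e.elim
                ht := fun e => e.elim } }
  open_in := fun _ _ e => e.elim
  open_out := fun _ _ e => e.elim

def ptHom (G : OGraph) (p : G.X.G.P) (hp : IsEdgePoint G p) : ptGraph ⟶ G :=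
  ⟨⟨⟨fun e => e.elim, fun _ => p, fun e => e.elim, fun e => e.elim⟩,
    fun _ => hp, fun e => e.elim⟩,
   fun _ hv => nomatch hv⟩

/-- Monos are injective on edge-points. -/
theorem mono_pp_eps {X Y : OGraph} (z : X ⟶ Y) [Mono z] {p₁ p₂ : X.X.G.P}
    (h1 : IsEdgePoint X p₁) (h : OHom.pp z p₁ = OHom.pp z p₂) : p₁ = p₂ := by
  have h2 : IsEdgePoint X p₂ := by
    unfold IsEdgePoint at *
    rw [← pp_type z p₂, ← h, pp_type z p₁]; exact h1
  have heq : ptHom X p₁ h1 ≫ z = ptHom X p₂ h2 ≫ z :=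
    OHom.ext' (funext fun e => e.elim) (funext fun _ => h)
  have := (cancel_mono z).mp heq
  exact congrFun (congrArg OHom.pp this) ()

/-- Monos are injective on edges. -/
theorem mono_pe_inj {X Y : OGraph} (z : X ⟶ Y) [Mono z] :
    Function.Injective (OHom.pe z) := by
  intro d₁ d₂ h
  rcases edge_has_eps X d₁ with he | he
  · have hss : OHom.pp z (X.X.G.s d₁) = OHom.pp z (X.X.G.s d₂) := by
      rw [← pp_s, ← pp_s, h]
    have := mono_pp_eps z he hss
    exact X.open_out (X.X.G.s d₁) he d₁ d₂ rfl this.symm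
  · have hss : OHom.pp z (X.X.G.t d₁) = OHom.pp z (X.X.G.t d₂) := by
      rw [← pp_t, ← pp_t, h]
    have := mono_pp_eps z he hss
    exact X.open_in (X.X.G.t d₁) he d₁ d₂ rfl this.symm

end Aux


/-! ### The star test object, proving monos are injective on vertices -/

/-- Edges of `Y` adjacent to `y`. -/
def StarE (Y : OGraph) (y : Y.X.G.P) : Type :=
  {ε : Y.X.G.E // Y.X.G.s ε = y ∨ Y.X.G.t ε = y}

open Classical in
noncomputable def starS (Y : OGraph) (y : Y.X.G.P) (ε : StarE Y y) :
    Unit ⊕ StarE Y y :=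
  if Y.X.G.s ε.1 = y then Sum.inl () else Sum.inr ε

open Classical in
noncomputable def starT (Y : OGraph) (y : Y.X.G.P) (ε : StarE Y y) :
    Unit ⊕ StarE Y y :=
  if Y.X.G.s ε.1 = y then Sum.inr ε else Sum.inl ()

theorem starS_pos (Y : OGraph) (y : Y.X.G.P) (ε : StarE Y y)
    (h : Y.X.G.s ε.1 = y) : starS Y y ε = Sum.inl () := if_pos h

theorem starS_neg (Y : OGraph) (y : Y.X.G.P) (ε : StarE Y y)
    (h : ¬ Y.X.G.s ε.1 = y) : starS Y y ε = Sum.inr ε := if_neg h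

theorem starT_pos (Y : OGraph) (y : Y.X.G.P) (ε : StarE Y y)
    (h : Y.X.G.s ε.1 = y) : starT Y y ε = Sum.inr ε := if_pos h

theorem starT_neg (Y : OGraph) (y : Y.X.G.P) (ε : StarE Y y)
    (h : ¬ Y.X.G.s ε.1 = y) : starT Y y ε = Sum.inl () := if_neg h

/-- The star of the vertex `y` in `Y`. -/
noncomputable def starGraph (Y : OGraph) (y : Y.X.G.P)
    (hy : Y.X.τ.pp y = TyP.V) : OGraph where
  X := { G := { E := StarE Y y
                P := Unit ⊕ StarE Y y
                s := starS Y y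
                t := starT Y y }
         τ := { pe := fun ε => Y.X.τ.pe ε.1
                pp := fun p => Sum.elim (fun _ => TyP.V) (fun _ => TyP.eps) p
                hs := by
                  intro ε
                  show twoG.s (Y.X.τ.pe ε.1) =
                    Sum.elim (fun _ => TyP.V) (fun _ => TyP.eps) (starS Y y ε)
                  by_cases h : Y.X.G.s ε.1 = y
                  · rw [starS_pos Y y ε h, Y.X.τ.hs ε.1, h]
                    exact hy
                  · have ht : Y.X.G.t ε.1 = y := ε.2.resolve_left h
                    rw [starS_neg Y y ε h, Y.X.τ.hs ε.1]
                    exact src_eps_of_tgt_V Y ε.1 (by rw [ht]; exact hy)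
                ht := by
                  intro ε
                  show twoG.t (Y.X.τ.pe ε.1) =
                    Sum.elim (fun _ => TyP.V) (fun _ => TyP.eps) (starT Y y ε)
                  by_cases h : Y.X.G.s ε.1 = y
                  · rw [starT_pos Y y ε h, Y.X.τ.ht ε.1]
                    exact tgt_eps_of_src_V Y ε.1 (by rw [h]; exact hy)
                  · have ht : Y.X.G.t ε.1 = y := ε.2.resolve_left h
                    rw [starT_neg Y y ε h, Y.X.τ.ht ε.1, ht]
                    exact hy } }
  open_in := by
    rintro (⟨⟩ | ε) hp e₁ e₂ h1 h2
    · exact absurd hp (by show ¬ (TyP.V = TyP.eps); simp)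
    · replace h1 : starT Y y e₁ = Sum.inr ε := h1
      replace h2 : starT Y y e₂ = Sum.inr ε := h2
      by_cases hc1 : Y.X.G.s e₁.1 = y
      · by_cases hc2 : Y.X.G.s e₂.1 = y
        · rw [starT_pos Y y e₁ hc1] at h1
          rw [starT_pos Y y e₂ hc2] at h2
          cases h1; cases h2; rfl
        · rw [starT_neg Y y e₂ hc2] at h2; exact absurd h2 (by simp)
      · rw [starT_neg Y y e₁ hc1] at h1; exact absurd h1 (by simp)
  open_out := by
    rintro (⟨⟩ | ε) hp e₁ e₂ h1 h2
    · exact absurd hp (by show ¬ (TyP.V = TyP.eps); simp)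
    · replace h1 : starS Y y e₁ = Sum.inr ε := h1
      replace h2 : starS Y y e₂ = Sum.inr ε := h2
      by_cases hc1 : Y.X.G.s e₁.1 = y
      · rw [starS_pos Y y e₁ hc1] at h1; exact absurd h1 (by simp)
      · by_cases hc2 : Y.X.G.s e₂.1 = y
        · rw [starS_pos Y y e₂ hc2] at h2; exact absurd h2 (by simp)
        · rw [starS_neg Y y e₁ hc1] at h1
          rw [starS_neg Y y e₂ hc2] at h2
          cases h1; cases h2; rfl

theorem star_p_vertex {X Y : OGraph} (z : X ⟶ Y) (p : X.X.G.P) {y : Y.X.G.P}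
    (hy : Y.X.τ.pp y = TyP.V) (hzp : OHom.pp z p = y) : X.X.τ.pp p = TyP.V := by
  rw [← pp_type z p, hzp]; exact hy

/-- Choose a preimage edge adjacent to `p` for every edge adjacent to `y`. -/
noncomputable def starC {X Y : OGraph} (z : X ⟶ Y) (p : X.X.G.P) {y : Y.X.G.P}
    (hy : Y.X.τ.pp y = TyP.V) (hzp : OHom.pp z p = y) (ε : StarE Y y) :
    X.X.G.E :=
  (z.full p (star_p_vertex z p hy hzp) ε.1
    (ε.2.imp (fun h => h.trans hzp.symm) (fun h => h.trans hzp.symm))).choose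

theorem starC_spec {X Y : OGraph} (z : X ⟶ Y) (p : X.X.G.P) {y : Y.X.G.P}
    (hy : Y.X.τ.pp y = TyP.V) (hzp : OHom.pp z p = y) (ε : StarE Y y) :
    OHom.pe z (starC z p hy hzp ε) = ε.1 ∧
      (X.X.G.s (starC z p hy hzp ε) = p ∨ X.X.G.t (starC z p hy hzp ε) = p) :=
  (z.full p (star_p_vertex z p hy hzp) ε.1
    (ε.2.imp (fun h => h.trans hzp.symm) (fun h => h.trans hzp.symm))).choose_spec

theorem starC_src {X Y : OGraph} (z : X ⟶ Y) (p : X.X.G.P) {y : Y.X.G.P}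
    (hy : Y.X.τ.pp y = TyP.V) (hzp : OHom.pp z p = y) (ε : StarE Y y)
    (h : Y.X.G.s ε.1 = y) : X.X.G.s (starC z p hy hzp ε) = p := by
  obtain ⟨h1, h2 | h2⟩ := starC_spec z p hy hzp ε
  · exact h2
  · exfalso
    have hst : X.X.τ.pp (X.X.G.s (starC z p hy hzp ε)) = TyP.eps :=
      src_eps_of_tgt_V X _ (by rw [h2]; exact star_p_vertex z p hy hzp)
    have hzz : OHom.pp z (X.X.G.s (starC z p hy hzp ε)) = y := by
      rw [← pp_s, h1, h]
    have hV : X.X.τ.pp (X.X.G.s (starC z p hy hzp ε)) = TyP.V := by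
      rw [← pp_type z _, hzz]; exact hy
    rw [hst] at hV; exact absurd hV (by simp)

theorem starC_tgt {X Y : OGraph} (z : X ⟶ Y) (p : X.X.G.P) {y : Y.X.G.P}
    (hy : Y.X.τ.pp y = TyP.V) (hzp : OHom.pp z p = y) (ε : StarE Y y)
    (h : ¬ Y.X.G.s ε.1 = y) : X.X.G.t (starC z p hy hzp ε) = p := by
  have hty : Y.X.G.t ε.1 = y := ε.2.resolve_left h
  obtain ⟨h1, h2 | h2⟩ := starC_spec z p hy hzp ε
  · exfalso
    have hst : X.X.τ.pp (X.X.G.t (starC z p hy hzp ε)) = TyP.eps :=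
      tgt_eps_of_src_V X _ (by rw [h2]; exact star_p_vertex z p hy hzp)
    have hzz : OHom.pp z (X.X.G.t (starC z p hy hzp ε)) = y := by
      rw [← pp_t, h1, hty]
    have hV : X.X.τ.pp (X.X.G.t (starC z p hy hzp ε)) = TyP.V := by
      rw [← pp_type z _, hzz]; exact hy
    rw [hst] at hV; exact absurd hV (by simp)
  · exact h2

open Classical in
/-- The "other endpoint" of the chosen preimage edge. -/
noncomputable def starO {X Y : OGraph} (z : X ⟶ Y) (p : X.X.G.P) {y : Y.X.G.P}
    (hy : Y.X.τ.pp y = TyP.V) (hzp : OHom.pp z p = y) (ε : StarE Y y) :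
    X.X.G.P :=
  if Y.X.G.s ε.1 = y then X.X.G.t (starC z p hy hzp ε)
  else X.X.G.s (starC z p hy hzp ε)

/-- The canonical map from the star of `y` into `X`, centred at `p`. -/
noncomputable def starHom {X Y : OGraph} (z : X ⟶ Y) (p : X.X.G.P) {y : Y.X.G.P}
    (hy : Y.X.τ.pp y = TyP.V) (hzp : OHom.pp z p = y)
    (hinj : Function.Injective (OHom.pe z)) : starGraph Y y hy ⟶ X where
  f :=
    { h :=
        { pe := fun ε => starC z p hy hzp ε
          pp := fun q => Sum.elim (fun _ => p) (fun ε => starO z p hy hzp ε) q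
          hs := by
            intro ε
            show X.X.G.s (starC z p hy hzp ε) =
              Sum.elim (fun _ => p) (fun ε => starO z p hy hzp ε) (starS Y y ε)
            by_cases h : Y.X.G.s ε.1 = y
            · rw [starS_pos Y y ε h]
              exact starC_src z p hy hzp ε h
            · rw [starS_neg Y y ε h]
              show _ = starO z p hy hzp ε
              delta starO; rw [if_neg h]
          ht := by
            intro ε
            show X.X.G.t (starC z p hy hzp ε) =
              Sum.elim (fun _ => p) (fun ε => starO z p hy hzp ε) (starT Y y ε)
            by_cases h : Y.X.G.s ε.1 = y
            · rw [starT_pos Y y ε h]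
              show _ = starO z p hy hzp ε
              delta starO; rw [if_pos h]
            · rw [starT_neg Y y ε h]
              exact starC_tgt z p hy hzp ε h }
      comm_pp := by
        rintro (⟨⟩ | ε)
        · exact star_p_vertex z p hy hzp
        · show X.X.τ.pp (starO z p hy hzp ε) = TyP.eps
          rw [starO]
          split
          · next h =>
              exact tgt_eps_of_src_V X _
                (by rw [starC_src z p hy hzp ε h]; exact star_p_vertex z p hy hzp)
          · next h =>
              exact src_eps_of_tgt_V X _
                (by rw [starC_tgt z p hy hzp ε h]; exact star_p_vertex z p hy hzp)
      comm_pe := by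
        intro ε
        show X.X.τ.pe (starC z p hy hzp ε) = Y.X.τ.pe ε.1
        rw [← (starC_spec z p hy hzp ε).1]
        exact (pe_type z _).symm }
  full := by
    rintro (⟨⟩ | ε) hv d hd
    · -- the centre
      have hadj : Y.X.G.s (OHom.pe z d) = y ∨ Y.X.G.t (OHom.pe z d) = y := by
        rcases hd with h | h
        · left; rw [pp_s, h]; exact hzp
        · right; rw [pp_t, h]; exact hzp
      refine ⟨⟨OHom.pe z d, hadj⟩, ?_, ?_⟩
      · apply hinj
        exact (starC_spec z p hy hzp ⟨OHom.pe z d, hadj⟩).1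
      · by_cases h : Y.X.G.s (OHom.pe z d) = y
        · exact Or.inl (starS_pos Y y ⟨OHom.pe z d, hadj⟩ h)
        · exact Or.inr (starT_neg Y y ⟨OHom.pe z d, hadj⟩ h)
    · exact absurd hv (by show ¬ (TyP.eps = TyP.V); simp)

/-- Monos are injective on points. -/
theorem mono_pp_inj {X Y : OGraph} (z : X ⟶ Y) [Mono z] :
    Function.Injective (OHom.pp z) := by
  intro p₁ p₂ h
  cases htp : X.X.τ.pp p₁ with
  | eps => exact mono_pp_eps z htp h
  | V =>
    have hy : Y.X.τ.pp (OHom.pp z p₁) = TyP.V := by rw [pp_type z p₁]; exact htp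
    have hinj := mono_pe_inj z
    have heq : starHom z p₁ hy rfl hinj ≫ z = starHom z p₂ hy h.symm hinj ≫ z := by
      refine OHom.ext' (funext fun ε => ?_) (funext fun q => ?_)
      · show OHom.pe z (starC z p₁ hy rfl ε) = OHom.pe z (starC z p₂ hy h.symm ε)
        rw [(starC_spec z p₁ hy rfl ε).1, (starC_spec z p₂ hy h.symm ε).1]
      · rcases q with ⟨⟩ | ε
        · exact h
        · show OHom.pp z (starO z p₁ hy rfl ε) = OHom.pp z (starO z p₂ hy h.symm ε)
          rw [starO, starO]
          split
          · next hc =>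
              rw [← pp_t, ← pp_t, (starC_spec z p₁ hy rfl ε).1,
                (starC_spec z p₂ hy h.symm ε).1]
          · next hc =>
              rw [← pp_s, ← pp_s, (starC_spec z p₁ hy rfl ε).1,
                (starC_spec z p₂ hy h.symm ε).1]
    have := (cancel_mono z).mp heq
    exact congrFun (congrArg OHom.pp this) (Sum.inl ())


theorem OHom.full' {G H : OGraph} (φ : G ⟶ H) (v : G.X.G.P)
    (hv : G.X.τ.pp v = TyP.V) (e : H.X.G.E)
    (he : H.X.G.s e = OHom.pp φ v ∨ H.X.G.t e = OHom.pp φ v) :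
    ∃ e', OHom.pe φ e' = e ∧ (G.X.G.s e' = v ∨ G.X.G.t e' = v) :=
  φ.full v hv e he

/-! ### The image factorisation -/

/-- The image of a morphism of open-graphs. -/
def imgGraph {G H : OGraph} (f : G ⟶ H) : OGraph where
  X := { G := { E := {d : H.X.G.E // ∃ g, OHom.pe f g = d}
                P := {q : H.X.G.P // ∃ g, OHom.pp f g = q}
                s := fun d => ⟨H.X.G.s d.1, by
                  obtain ⟨g, hg⟩ := d.2
                  exact ⟨G.X.G.s g, by rw [← hg, pp_s]⟩⟩
                t := fun d => ⟨H.X.G.t d.1, by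
                  obtain ⟨g, hg⟩ := d.2
                  exact ⟨G.X.G.t g, by rw [← hg, pp_t]⟩⟩ }
         τ := { pe := fun d => H.X.τ.pe d.1
                pp := fun q => H.X.τ.pp q.1
                hs := fun d => H.X.τ.hs d.1
                ht := fun d => H.X.τ.ht d.1 } }
  open_in := by
    rintro ⟨q, hq⟩ hp ⟨d₁, hd₁⟩ ⟨d₂, hd₂⟩ h1 h2
    exact Subtype.ext (H.open_in q hp d₁ d₂
      (congrArg Subtype.val h1) (congrArg Subtype.val h2))
  open_out := by
    rintro ⟨q, hq⟩ hp ⟨d₁, hd₁⟩ ⟨d₂, hd₂⟩ h1 h2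
    exact Subtype.ext (H.open_out q hp d₁ d₂
      (congrArg Subtype.val h1) (congrArg Subtype.val h2))

/-- The mono part: inclusion of the image. -/
def imgM {G H : OGraph} (f : G ⟶ H) : imgGraph f ⟶ H where
  f := { h := { pe := Subtype.val
                pp := Subtype.val
                hs := fun _ => rfl
                ht := fun _ => rfl }
         comm_pp := fun _ => rfl
         comm_pe := fun _ => rfl }
  full := by
    rintro ⟨q, g, hg⟩ hv d hd
    have hgv : G.X.τ.pp g = TyP.V := by
      rw [← pp_type f g, hg]; exact hv
    have hd' : H.X.G.s d = OHom.pp f g ∨ H.X.G.t d = OHom.pp f g := by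
      rcases hd with h | h
      · left; rw [h, hg]
      · right; rw [h, hg]
    obtain ⟨d', hd', hadj⟩ := OHom.full' f g hgv d hd'
    refine ⟨⟨d, d', hd'⟩, rfl, ?_⟩
    rcases hadj with h | h
    · left
      exact Subtype.ext (show H.X.G.s d = q by rw [← hd', pp_s, h, hg])
    · right
      exact Subtype.ext (show H.X.G.t d = q by rw [← hd', pp_t, h, hg])

/-- The strong-epi part: corestriction onto the image. -/
def imgE {G H : OGraph} (f : G ⟶ H) : G ⟶ imgGraph f where
  f := { h := { pe := fun g => ⟨OHom.pe f g, g, rfl⟩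
                pp := fun g => ⟨OHom.pp f g, g, rfl⟩
                hs := fun g => Subtype.ext (pp_s f g)
                ht := fun g => Subtype.ext (pp_t f g) }
         comm_pp := fun g => pp_type f g
         comm_pe := fun g => pe_type f g }
  full := by
    rintro v hv ⟨d, hd⟩ hadj
    have hs' : H.X.G.s d = OHom.pp f v ∨ H.X.G.t d = OHom.pp f v := by
      rcases hadj with h | h
      · left; exact congrArg Subtype.val h
      · right; exact congrArg Subtype.val h
    obtain ⟨e', he', hadj'⟩ := f.full v hv d hs'
    exact ⟨e', Subtype.ext he', hadj'⟩

theorem imgFac {G H : OGraph} (f : G ⟶ H) : imgE f ≫ imgM f = f :=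
  OHom.ext' rfl rfl

theorem mono_imgM {G H : OGraph} (f : G ⟶ H) : Mono (imgM f) :=
  mono_of_injective _ (fun _ _ h => Subtype.ext h) (fun _ _ h => Subtype.ext h)

theorem epi_imgE {G H : OGraph} (f : G ⟶ H) : Epi (imgE f) :=
  epi_of_surjective _
    (fun d => ⟨d.2.choose, Subtype.ext d.2.choose_spec⟩)
    (fun q => ⟨q.2.choose, Subtype.ext q.2.choose_spec⟩)

/-- The point component of the lift. -/
noncomputable def liftPP {G H Z : OGraph} (f : G ⟶ H) (u : G ⟶ Z) (q : (imgGraph f).X.G.P) : Z.X.G.P :=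
  OHom.pp u q.2.choose

/-- The edge component of the lift. -/
noncomputable def liftPE {G H Z : OGraph} (f : G ⟶ H) (u : G ⟶ Z) (d : (imgGraph f).X.G.E) : Z.X.G.E :=
  OHom.pe u d.2.choose

theorem liftPP_eq {G H Z W : OGraph} (f : G ⟶ H) (z : Z ⟶ W)
    (hppinj : Function.Injective (OHom.pp z)) (hpeinj : Function.Injective (OHom.pe z))
    (u : G ⟶ Z) (v : imgGraph f ⟶ W) (hw : u ≫ z = imgE f ≫ v) (q : (imgGraph f).X.G.P) (g₀ : G.X.G.P)
    (hg₀ : OHom.pp f g₀ = q.1) : liftPP f u q = OHom.pp u g₀ := by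
  apply hppinj
  have h1 := congrFun (congrArg OHom.pp hw) q.2.choose
  have h2 := congrFun (congrArg OHom.pp hw) g₀
  rw [comp_pp, comp_pp] at h1 h2
  rw [liftPP, h1, h2]
  congr 1
  exact Subtype.ext (q.2.choose_spec.trans hg₀.symm)

theorem liftPE_eq {G H Z W : OGraph} (f : G ⟶ H) (z : Z ⟶ W)
    (hppinj : Function.Injective (OHom.pp z)) (hpeinj : Function.Injective (OHom.pe z))
    (u : G ⟶ Z) (v : imgGraph f ⟶ W) (hw : u ≫ z = imgE f ≫ v) (d : (imgGraph f).X.G.E) (g₀ : G.X.G.E)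
    (hg₀ : OHom.pe f g₀ = d.1) : liftPE f u d = OHom.pe u g₀ := by
  apply hpeinj
  have h1 := congrFun (congrArg OHom.pe hw) d.2.choose
  have h2 := congrFun (congrArg OHom.pe hw) g₀
  rw [comp_pe, comp_pe] at h1 h2
  rw [liftPE, h1, h2]
  congr 1
  exact Subtype.ext (d.2.choose_spec.trans hg₀.symm)

/-- The diagonal lift of a commuting square with `imgE f` on the left and an
injective morphism on the right. -/
noncomputable def imgLift {G H Z W : OGraph} (f : G ⟶ H) (z : Z ⟶ W)
    (hppinj : Function.Injective (OHom.pp z)) (hpeinj : Function.Injective (OHom.pe z))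
    (u : G ⟶ Z) (v : imgGraph f ⟶ W) (hw : u ≫ z = imgE f ≫ v) : imgGraph f ⟶ Z where
  f :=
    { h :=
        { pe := liftPE f u
          pp := liftPP f u
          hs := by
            intro d
            obtain ⟨g₀, hg₀⟩ := d.2
            rw [liftPE_eq f z hppinj hpeinj u v hw d g₀ hg₀, pp_s u g₀]
            exact (liftPP_eq f z hppinj hpeinj u v hw _ (G.X.G.s g₀)
              (by show OHom.pp f (G.X.G.s g₀) = H.X.G.s d.1
                  rw [← pp_s, hg₀])).symm
          ht := by
            intro d
            obtain ⟨g₀, hg₀⟩ := d.2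
            rw [liftPE_eq f z hppinj hpeinj u v hw d g₀ hg₀, pp_t u g₀]
            exact (liftPP_eq f z hppinj hpeinj u v hw _ (G.X.G.t g₀)
              (by show OHom.pp f (G.X.G.t g₀) = H.X.G.t d.1
                  rw [← pp_t, hg₀])).symm }
      comm_pp := by
        intro q
        obtain ⟨g₀, hg₀⟩ := q.2
        show Z.X.τ.pp (liftPP f u q) = H.X.τ.pp q.1
        rw [liftPP_eq f z hppinj hpeinj u v hw q g₀ hg₀, pp_type u g₀,
          ← pp_type f g₀, hg₀]
      comm_pe := by
        intro d
        obtain ⟨g₀, hg₀⟩ := d.2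
        show Z.X.τ.pe (liftPE f u d) = H.X.τ.pe d.1
        rw [liftPE_eq f z hppinj hpeinj u v hw d g₀ hg₀, pe_type u g₀,
          ← pe_type f g₀, hg₀] }
  full := by
    rintro q hv d hd
    obtain ⟨g₀, hg₀⟩ := q.2
    have hgv : G.X.τ.pp g₀ = TyP.V := by
      rw [← pp_type f g₀, hg₀]; exact hv
    have hd' : Z.X.G.s d = OHom.pp u g₀ ∨ Z.X.G.t d = OHom.pp u g₀ := by
      rcases hd with h | h
      · left; rw [h]; exact liftPP_eq f z hppinj hpeinj u v hw q g₀ hg₀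
      · right; rw [h]; exact liftPP_eq f z hppinj hpeinj u v hw q g₀ hg₀
    obtain ⟨d', hd', hadj⟩ := OHom.full' u g₀ hgv d hd'
    refine ⟨⟨OHom.pe f d', d', rfl⟩, ?_, ?_⟩
    · show liftPE f u ⟨OHom.pe f d', d', rfl⟩ = d
      rw [liftPE_eq f z hppinj hpeinj u v hw ⟨OHom.pe f d', d', rfl⟩ d' rfl]
      exact hd'
    · rcases hadj with h | h
      · left
        exact Subtype.ext (show H.X.G.s (OHom.pe f d') = q.1 by rw [pp_s, h, hg₀])
      · right
        exact Subtype.ext (show H.X.G.t (OHom.pe f d') = q.1 by rw [pp_t, h, hg₀])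

theorem imgLift_fac_left {G H Z W : OGraph} (f : G ⟶ H) (z : Z ⟶ W)
    (hppinj : Function.Injective (OHom.pp z)) (hpeinj : Function.Injective (OHom.pe z))
    (u : G ⟶ Z) (v : imgGraph f ⟶ W) (hw : u ≫ z = imgE f ≫ v) :
    imgE f ≫ imgLift f z hppinj hpeinj u v hw = u := by
  refine OHom.ext' (funext fun x => ?_) (funext fun x => ?_)
  · exact liftPE_eq f z hppinj hpeinj u v hw ⟨OHom.pe f x, x, rfl⟩ x rfl
  · exact liftPP_eq f z hppinj hpeinj u v hw ⟨OHom.pp f x, x, rfl⟩ x rfl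

theorem imgLift_fac_right {G H Z W : OGraph} (f : G ⟶ H) (z : Z ⟶ W)
    (hppinj : Function.Injective (OHom.pp z)) (hpeinj : Function.Injective (OHom.pe z))
    (u : G ⟶ Z) (v : imgGraph f ⟶ W) (hw : u ≫ z = imgE f ≫ v) :
    imgLift f z hppinj hpeinj u v hw ≫ z = v := by
  refine OHom.ext' (funext fun d => ?_) (funext fun q => ?_)
  · obtain ⟨g₀, hg₀⟩ := d.2
    show OHom.pe z (liftPE f u d) = OHom.pe v d
    rw [liftPE_eq f z hppinj hpeinj u v hw d g₀ hg₀]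
    have h2 := congrFun (congrArg OHom.pe hw) g₀
    rw [comp_pe, comp_pe] at h2
    rw [h2]
    congr 1
    exact Subtype.ext hg₀
  · obtain ⟨g₀, hg₀⟩ := q.2
    show OHom.pp z (liftPP f u q) = OHom.pp v q
    rw [liftPP_eq f z hppinj hpeinj u v hw q g₀ hg₀]
    have h2 := congrFun (congrArg OHom.pp hw) g₀
    rw [comp_pp, comp_pp] at h2
    rw [h2]
    congr 1
    exact Subtype.ext hg₀


theorem strongEpi_imgE {G H : OGraph} (f : G ⟶ H) : StrongEpi (imgE f) where
  epi := epi_imgE f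
  llp := by
    intro Z W z hz
    constructor
    intro u v sq
    exact CommSq.HasLift.mk'
      ⟨imgLift f z (mono_pp_inj z) (mono_pe_inj z) u v sq.w,
        imgLift_fac_left f z (mono_pp_inj z) (mono_pe_inj z) u v sq.w,
        imgLift_fac_right f z (mono_pp_inj z) (mono_pe_inj z) u v sq.w⟩

/-- `OGraph` has unique strong epi–mono factorisations: every morphism factors as a
strong epimorphism followed by a monomorphism, uniquely up to isomorphism. -/
theorem ograph_strongEpi_mono_factorisation {G H : OGraph} (f : G ⟶ H) :
    (∃ (I : OGraph) (e : G ⟶ I) (m : I ⟶ H),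
        StrongEpi e ∧ Mono m ∧ e ≫ m = f) ∧
    (∀ (I I' : OGraph) (e : G ⟶ I) (m : I ⟶ H) (e' : G ⟶ I') (m' : I' ⟶ H),
        StrongEpi e → Mono m → e ≫ m = f →
        StrongEpi e' → Mono m' → e' ≫ m' = f →
        ∃ φ : I ≅ I', e ≫ φ.hom = e' ∧ φ.hom ≫ m' = m) := by
  constructor
  · exact ⟨imgGraph f, imgE f, imgM f, strongEpi_imgE f, mono_imgM f, imgFac f⟩
  · intro I I' e m e' m' he hm hfac he' hm' hfac'
    haveI := hm; haveI := hm'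
    haveI : Epi e := he.epi
    haveI : Epi e' := he'.epi
    have sq1 : CommSq e' e m' m := ⟨by rw [hfac, hfac']⟩
    obtain ⟨l, hl1, hl2⟩ := ((he.llp m').sq_hasLift sq1).exists_lift.some
    have sq2 : CommSq e e' m m' := ⟨by rw [hfac, hfac']⟩
    obtain ⟨l', hl1', hl2'⟩ := ((he'.llp m).sq_hasLift sq2).exists_lift.some
    refine ⟨⟨l, l', ?_, ?_⟩, hl1, hl2⟩
    · apply (cancel_epi e).mp
      rw [← Category.assoc, hl1, hl1', Category.comp_id]
    · apply (cancel_epi e').mp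
      rw [← Category.assoc, hl1', hl1, Category.comp_id]
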